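/- Suppose ‖u − ũ‖_E² = O(h^{2p+2}) + R², where R = R(λ̃, ũ) ≥ 0 satisfies R²/h^{2p} → C₀ > 0 as h → 0. Then there exists ρ = O(h²) with 0 < ρ < 1 such that (1 − ρ)R ≤ ‖u − ũ‖_E ≤ (1 + ρ)R for all sufficiently small h; in particular the effectivity index R / ‖u − ũ‖_E converges to 1 at rate O(h²). -/

import Mathlib

open Filter Asymptotics Topology

/-- A posteriori error estimator: if ‖u − ũ‖_E² = O(h^{2p+2}) + R² with the
residual R of exact order hᵖ (R²/h^{2p} → C₀ > 0), then there is ρ = O(h²),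
0 < ρ < 1, such that (1 − ρ)R ≤ ‖u − ũ‖_E ≤ (1 + ρ)R for small h; in
particular the effectivity index R/‖u − ũ‖_E converges to 1 at rate O(h²). -/
theorem stmt18 (p : ℕ) (E R : ℝ → ℝ)
    (hE : ∀ h : ℝ, 0 < h → 0 ≤ E h) (hR : ∀ h : ℝ, 0 < h → 0 ≤ R h)
    (C₀ : ℝ) (hC₀ : 0 < C₀)
    (hsup : ∃ C : ℝ, ∀ᶠ h in 𝓝[>] (0:ℝ), |(E h)^2 - (R h)^2| ≤ C * h ^ (2*p+2))
    (hconv : Tendsto (fun h => (R h)^2 / h ^ (2*p)) (𝓝[>] (0:ℝ)) (𝓝 C₀)) :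
    (∃ ρ : ℝ → ℝ, (ρ =O[𝓝[>] (0:ℝ)] fun h => h^2) ∧
      ∀ᶠ h in 𝓝[>] (0:ℝ), 0 < ρ h ∧ ρ h < 1 ∧
        (1 - ρ h) * R h ≤ E h ∧ E h ≤ (1 + ρ h) * R h) ∧
    (fun h => R h / E h - 1) =O[𝓝[>] (0:ℝ)] fun h => h^2 := by
  obtain ⟨C, hC⟩ := hsup
  obtain ⟨M, hM⟩ : ∃ M : ℝ, M = 2 * max C 0 / C₀ + 1 := ⟨_, rfl⟩
  have hX : 0 ≤ 2 * max C 0 / C₀ := by positivity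
  have hMpos : 0 < M := by rw [hM]; linarith
  have h2 : ∀ᶠ h in 𝓝[>] (0:ℝ), C₀ / 2 < (R h)^2 / h ^ (2*p) :=
    hconv.eventually (eventually_gt_nhds (by linarith))
  have h3 : ∀ᶠ h in 𝓝[>] (0:ℝ), M * h^2 < 1/2 := by
    have hc : Continuous (fun h : ℝ => M * h^2) := continuous_const.mul (continuous_pow 2)
    have ht : Tendsto (fun h : ℝ => M * h^2) (𝓝[>] (0:ℝ)) (𝓝 0) :=
      (hc.tendsto' (0:ℝ) 0 (by simp)).mono_left nhdsWithin_le_nhds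
    exact ht.eventually (eventually_lt_nhds (by norm_num))
  have key : ∀ᶠ h in 𝓝[>] (0:ℝ),
      (0 < M * h^2 ∧ M * h^2 < 1 ∧
        (1 - M * h^2) * R h ≤ E h ∧ E h ≤ (1 + M * h^2) * R h) ∧
      |R h / E h - 1| ≤ 2 * M * h^2 := by
    filter_upwards [hC, h2, h3, self_mem_nhdsWithin] with h h1 h2 h3 hh
    have hh : (0:ℝ) < h := hh
    have hpow : 0 < h ^ (2*p) := pow_pos hh _
    have hR2 : C₀ / 2 * h ^ (2*p) < (R h)^2 := by
      have := (lt_div_iff₀ hpow).mp h2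
      linarith
    have hRnn := hR h hh
    have hEnn := hE h hh
    have hRpos : 0 < R h := by nlinarith
    have hsplit : h ^ (2*p+2) = h ^ (2*p) * h^2 := by ring
    have hCle : C * h ^ (2*p+2) ≤ max C 0 * h ^ (2*p+2) :=
      mul_le_mul_of_nonneg_right (le_max_left _ _) (le_of_lt (pow_pos hh _))
    have hMC : max C 0 ≤ M * (C₀/2) := by
      have hMeq : M * (C₀/2) = max C 0 + C₀/2 := by
        rw [hM]; field_simp
      rw [hMeq]; linarith
    have hρpos : 0 < M * h^2 := by positivity
    have hkey : |E h - R h| * R h ≤ M * h^2 * (R h)^2 := by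
      have e1 : |E h - R h| * (E h + R h) = |(E h)^2 - (R h)^2| := by
        rw [← abs_of_nonneg (by linarith : (0:ℝ) ≤ E h + R h), ← abs_mul]
        ring_nf
      have e2 : |E h - R h| * R h ≤ |E h - R h| * (E h + R h) :=
        mul_le_mul_of_nonneg_left (by linarith) (abs_nonneg _)
      have e3 : max C 0 * h ^ (2*p+2) ≤ M * h^2 * (R h)^2 := by
        calc max C 0 * h ^ (2*p+2) ≤ M * (C₀/2) * h ^ (2*p+2) :=
              mul_le_mul_of_nonneg_right hMC (le_of_lt (pow_pos hh _))
          _ = M * h^2 * (C₀/2 * h ^ (2*p)) := by rw [hsplit]; ring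
          _ ≤ M * h^2 * (R h)^2 :=
              mul_le_mul_of_nonneg_left (le_of_lt hR2) (le_of_lt hρpos)
      calc |E h - R h| * R h ≤ |(E h)^2 - (R h)^2| := e1 ▸ e2
        _ ≤ C * h ^ (2*p+2) := h1
        _ ≤ max C 0 * h ^ (2*p+2) := hCle
        _ ≤ M * h^2 * (R h)^2 := e3
    have habs : |E h - R h| ≤ M * h^2 * R h := by
      have h' : |E h - R h| * R h ≤ (M * h^2 * R h) * R h := by nlinarith
      exact le_of_mul_le_mul_right h' hRpos
    obtain ⟨hl, hr⟩ := abs_le.mp habs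
    have hlow : (1 - M * h^2) * R h ≤ E h := by nlinarith
    have hupp : E h ≤ (1 + M * h^2) * R h := by nlinarith
    have hhalf : (1/2) * R h ≤ (1 - M * h^2) * R h :=
      mul_le_mul_of_nonneg_right (by linarith) hRnn
    have hEpos : 0 < E h := by linarith
    refine ⟨⟨hρpos, by linarith, hlow, hupp⟩, ?_⟩
    rw [div_sub_one hEpos.ne', abs_div, abs_of_pos hEpos, div_le_iff₀ hEpos]
    have hR2E : R h ≤ 2 * E h := by linarith
    calc |R h - E h| = |E h - R h| := abs_sub_comm _ _
      _ ≤ M * h^2 * R h := habs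
      _ ≤ M * h^2 * (2 * E h) := mul_le_mul_of_nonneg_left hR2E (le_of_lt hρpos)
      _ = 2 * M * h^2 * E h := by ring
  constructor
  · refine ⟨fun h => M * h^2, ?_, ?_⟩
    · exact (isBigO_refl (fun h : ℝ => h^2) _).const_mul_left M
    · exact key.mono fun h hh => hh.1
  · rw [isBigO_iff]
    refine ⟨2 * M, ?_⟩
    filter_upwards [key, self_mem_nhdsWithin] with h hh hpos
    have hp : (0:ℝ) < h := hpos
    calc ‖R h / E h - 1‖ = |R h / E h - 1| := rfl
      _ ≤ 2 * M * h^2 := hh.2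
      _ = 2 * M * ‖h^2‖ := by rw [Real.norm_eq_abs, abs_of_pos (by positivity)]
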